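/- Let k ≥ 2, m ≥ 3, k ≤ m, and consider R = Z[x_1,x_2]/⟨x_1^k, h_{m-1}(x_1,x_2)⟩ (the ring R^{(k,m)}). Then for every integer α, the element (x_2 + α x_1)^{m-1} is nonzero in R. Moreover x_2^m = 0 in R. -/

import Mathlib

open MvPolynomial Finset

/-- The set of the first `j` variables among `x_0, ..., x_{n-1}`. -/
def fv (n j : ℕ) : Finset (Fin n) := Finset.univ.filter (fun i => (i : ℕ) < j)

/-- Complete homogeneous symmetric polynomial of degree `m` in the variables indexed by `S`. -/
noncomputable def hh (R : Type*) [CommRing R] (n m : ℕ) (S : Finset (Fin n)) :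
    MvPolynomial (Fin n) R :=
  ∑ s ∈ S.sym m, ((s : Multiset (Fin n)).map (X : Fin n → MvPolynomial (Fin n) R)).prod

/-- Elementary symmetric polynomial of degree `m` in the variables indexed by `S`. -/
noncomputable def ee (R : Type*) [CommRing R] (n m : ℕ) (S : Finset (Fin n)) :
    MvPolynomial (Fin n) R :=
  ∑ s ∈ S.powersetCard m, ∏ i ∈ s, X i

lemma count01 (s : Multiset (Fin 2)) :
    Multiset.count 0 s + Multiset.count 1 s = Multiset.card s := by
  induction s using Multiset.induction_on with
  | empty => simp
  | cons a s ih =>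
    fin_cases a <;> simp [Multiset.count_cons, ← ih] <;> ring

lemma multiset_fin2 (s : Multiset (Fin 2)) :
    s = Multiset.replicate (Multiset.count 0 s) 0
      + Multiset.replicate (Multiset.count 1 s) 1 := by
  ext a
  fin_cases a <;> simp [Multiset.count_replicate]

lemma fv22 : fv 2 2 = (Finset.univ : Finset (Fin 2)) := by
  ext i
  simp [fv, i.isLt]
  have := i.isLt; omega

lemma hh_eq (n : ℕ) :
    hh ℤ 2 n (fv 2 2)
      = ∑ j ∈ range (n + 1), X 0 ^ j * X 1 ^ (n - j) := by
  rw [fv22]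
  unfold hh
  rw [Finset.sym_univ]
  refine Finset.sum_nbij' (fun s => Multiset.count 0 (s : Multiset (Fin 2)))
    (fun j => ⟨Multiset.replicate (min j n) 0 + Multiset.replicate (n - min j n) 1, ?_⟩)
    ?_ ?_ ?_ ?_ ?_
  · simp only [Multiset.card_add, Multiset.card_replicate]
    omega
  · intro s _
    have h1 : Multiset.count 0 (s : Multiset (Fin 2)) ≤ Multiset.card (s : Multiset (Fin 2)) :=
      Multiset.count_le_card _ _
    have h2 : Multiset.card (s : Multiset (Fin 2)) = n := s.prop
    simp only [Finset.mem_range]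
    omega
  · intro j _
    exact Finset.mem_univ _
  · intro s _
    have h2 : Multiset.card (s : Multiset (Fin 2)) = n := s.prop
    have h3 := count01 (s : Multiset (Fin 2))
    apply Subtype.ext
    have h4 : min (Multiset.count 0 (s : Multiset (Fin 2))) n
        = Multiset.count 0 (s : Multiset (Fin 2)) := by omega
    show Multiset.replicate _ 0 + Multiset.replicate _ 1 = _
    rw [h4]
    have h5 : n - Multiset.count 0 (s : Multiset (Fin 2))
        = Multiset.count 1 (s : Multiset (Fin 2)) := by omega
    rw [h5]
    exact (multiset_fin2 _).symm
  · intro j hj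
    simp only [Finset.mem_range] at hj
    simp [Multiset.count_replicate]
    omega
  · intro s _
    have h2 : Multiset.card (s : Multiset (Fin 2)) = n := s.prop
    have h3 := count01 (s : Multiset (Fin 2))
    have hdec := multiset_fin2 (s : Multiset (Fin 2))
    conv_lhs => rw [hdec]
    rw [Multiset.map_add, Multiset.prod_add, Multiset.map_replicate, Multiset.map_replicate,
      Multiset.prod_replicate, Multiset.prod_replicate]
    have h5 : Multiset.count 1 (s : Multiset (Fin 2))
        = n - Multiset.count 0 (s : Multiset (Fin 2)) := by omega
    rw [h5]

noncomputable def w : Fin 2 → DualNumber (Polynomial ℤ) :=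
  ![DualNumber.eps, TrivSqZeroExt.inl Polynomial.X]

lemma eps_pow_eq_zero {j : ℕ} (hj : 2 ≤ j) : (DualNumber.eps : DualNumber (Polynomial ℤ)) ^ j = 0 := by
  have : (DualNumber.eps : DualNumber (Polynomial ℤ)) ^ j
      = (DualNumber.eps * DualNumber.eps) * DualNumber.eps ^ (j - 2) := by
    rw [← pow_two, ← pow_add]; congr 1; omega
  rw [this, DualNumber.eps_mul_eps, zero_mul]

lemma aeval_hh (m : ℕ) (hm : 3 ≤ m) :
    MvPolynomial.aeval w (hh ℤ 2 (m - 1) (fv 2 2))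
      = TrivSqZeroExt.inl (Polynomial.X ^ (m - 1))
        + TrivSqZeroExt.inr (Polynomial.X ^ (m - 2)) := by
  rw [hh_eq]
  have hm1 : m - 1 + 1 = m := by omega
  rw [hm1, map_sum]
  have hterm : ∀ j ∈ range m, (MvPolynomial.aeval w) ((X 0 ^ j * X 1 ^ (m - 1 - j) : MvPolynomial (Fin 2) ℤ))
      = DualNumber.eps ^ j * TrivSqZeroExt.inl (Polynomial.X ^ (m - 1 - j)) := by
    intro j _
    simp [w, map_pow]
  rw [Finset.sum_congr rfl hterm]
  rw [← Finset.sum_subset (Finset.range_subset_range.mpr (by omega : 2 ≤ m))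
    (fun x _ hx => by
      rw [eps_pow_eq_zero (by simp at hx; omega), zero_mul])]
  rw [Finset.sum_range_succ, Finset.sum_range_one, pow_zero, pow_one, one_mul,
    Nat.sub_zero, show m - 1 - 1 = m - 2 by omega, DualNumber.eps,
    TrivSqZeroExt.inr_mul_inl]
  simp

/-- for `2 ≤ k ≤ m`, `3 ≤ m`, in `R^{(k,m)} = ℤ[x_1,x_2]/⟨x_1^k, h_{m-1}(x_1,x_2)⟩`,
the element `(x_2 + α x_1)^{m-1}` is nonzero for every integer `α`, while `x_2^m = 0`. -/
theorem stmt17 (k m : ℕ) (hk : 2 ≤ k) (hm : 3 ≤ m) (hkm : k ≤ m)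
    (I : Ideal (MvPolynomial (Fin 2) ℤ))
    (hI : I = Ideal.span {X 0 ^ k, hh ℤ 2 (m - 1) (fv 2 2)}) :
    (∀ α : ℤ, (Ideal.Quotient.mk I (X 1 + C α * X 0)) ^ (m - 1) ≠ 0) ∧
    (Ideal.Quotient.mk I (X 1)) ^ m = 0 := by
  constructor
  · intro α hcon
    rw [← map_pow, Ideal.Quotient.eq_zero_iff_mem, hI] at hcon
    obtain ⟨u, v, huv⟩ := Ideal.mem_span_pair.mp hcon
    have heq := congrArg (MvPolynomial.aeval w) huv
    rw [map_add, map_mul, map_mul, map_pow, map_pow, map_add, map_mul] at heq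
    simp only [MvPolynomial.aeval_X, MvPolynomial.aeval_C] at heq
    rw [aeval_hh m hm] at heq
    have hw0 : w 0 = DualNumber.eps := rfl
    have hw1 : w 1 = TrivSqZeroExt.inl Polynomial.X := rfl
    rw [hw0, hw1, eps_pow_eq_zero hk, mul_zero, zero_add] at heq
    -- heq : aeval w v * (inl X^{m-1} + inr X^{m-2}) = (inl X + algMap α * eps)^{m-1}
    set q := (MvPolynomial.aeval w) v with hq
    have halg : (algebraMap ℤ (DualNumber (Polynomial ℤ))) α
        = TrivSqZeroExt.inl (Polynomial.C α) := rfl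
    rw [halg] at heq
    have hfst := congrArg TrivSqZeroExt.fst heq
    have hsnd := congrArg TrivSqZeroExt.snd heq
    simp only [TrivSqZeroExt.fst_mul, TrivSqZeroExt.snd_mul, TrivSqZeroExt.fst_add,
      TrivSqZeroExt.snd_add, TrivSqZeroExt.fst_inl, TrivSqZeroExt.snd_inl,
      TrivSqZeroExt.fst_inr, TrivSqZeroExt.snd_inr, TrivSqZeroExt.fst_pow,
      TrivSqZeroExt.snd_pow, smul_eq_mul, MulOpposite.op_smul, op_smul_eq_smul,
      smul_zero, mul_zero, add_zero, zero_add, mul_one, DualNumber.fst_eps,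
      DualNumber.snd_eps] at hfst hsnd
    -- hfst : q.fst * X^{m-1} = X^{m-1}
    have hXne : (Polynomial.X : Polynomial ℤ) ^ (m - 2) ≠ 0 :=
      pow_ne_zero _ Polynomial.X_ne_zero
    have hq0 : TrivSqZeroExt.fst q = 1 := by
      apply mul_right_cancel₀ (pow_ne_zero (m - 1) (Polynomial.X_ne_zero (R := ℤ)))
      rw [one_mul]; exact hfst
    rw [hq0, one_mul, show (m - 1).pred = m - 2 by rw [Nat.pred_eq_sub_one]; omega,
      show m - 1 = (m - 2) + 1 by omega, nsmul_eq_mul] at hsnd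
    have h2 : (1 : Polynomial ℤ) + Polynomial.X * TrivSqZeroExt.snd q
        = ((m - 2 + 1 : ℕ) : Polynomial ℤ) * Polynomial.C α := by
      apply mul_left_cancel₀ hXne
      ring_nf
      ring_nf at hsnd
      linear_combination hsnd
    have h3 := congrArg (Polynomial.eval 0) h2
    simp only [Polynomial.eval_add, Polynomial.eval_one, Polynomial.eval_mul,
      Polynomial.eval_X, Polynomial.eval_natCast, Polynomial.eval_C, zero_mul,
      add_zero] at h3
    have hdvd : ((m - 2 + 1 : ℕ) : ℤ) ∣ 1 := ⟨α, h3⟩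
    have hle := Int.le_of_dvd one_pos hdvd
    have : ((m - 2 + 1 : ℕ) : ℤ) ≥ 2 := by
      have : m - 2 + 1 ≥ 2 := by omega
      exact_mod_cast this
    omega
    -- hfst : q.fst * X^{m-1} = X^{m-1} (roughly)
    -- hsnd : q.fst * X^{m-2} + q.snd * X^{m-1} = (m-1) • (X^{m-2} * C α)
  · have h1 : (X 0 : MvPolynomial (Fin 2) ℤ) ^ (m - k) * X 0 ^ k = X 0 ^ m := by
      rw [← pow_add]; congr 1; omega
    have key : (X 1 : MvPolynomial (Fin 2) ℤ) ^ m
        = X 0 ^ (m - k) * X 0 ^ k + (X 1 - X 0) * hh ℤ 2 (m - 1) (fv 2 2) := by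
      rw [h1, hh_eq, show m - 1 + 1 = m by omega]
      linear_combination geom_sum₂_mul (X 0 : MvPolynomial (Fin 2) ℤ) (X 1) m
    rw [← map_pow, Ideal.Quotient.eq_zero_iff_mem, hI]
    exact Ideal.mem_span_pair.mpr ⟨X 0 ^ (m - k), X 1 - X 0, key.symm⟩
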